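/- The group SL_2(Z) admits a presentation with generators s and t and relations s^4 = 1 and (st)^3 = s^2, where s is the matrix [[0,-1],[1,0]] and t is the matrix [[1,1],[0,1]]. -/

import Mathlib

open FreeGroup

/-- The relations of the presentation `⟨s, t ∣ s⁴ = 1, (st)³ = s²⟩`:
`s` corresponds to `of 0` and `t` to `of 1`. -/
def sl2PresRels : Set (FreeGroup (Fin 2)) :=
  {(of 0) ^ 4, ((of 0) * (of 1)) ^ 3 * ((of 0) ^ 2)⁻¹}

open Matrix MatrixGroups

open Matrix MatrixGroups

noncomputable section

abbrev Irr := {x : ℝ // Irrational x}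

namespace SL2Irr

variable (g : SL(2,ℤ)) (x : ℝ)

def num : ℝ := (g.1 0 0 : ℤ) * x + (g.1 0 1 : ℤ)
def den : ℝ := (g.1 1 0 : ℤ) * x + (g.1 1 1 : ℤ)

lemma det_coe' : (g.1 0 0 : ℝ) * (g.1 1 1 : ℤ) - (g.1 0 1 : ℤ) * (g.1 1 0 : ℤ) = 1 := by
  have h := g.2
  rw [Matrix.det_fin_two] at h
  exact_mod_cast h

lemma den_ne_zero (hx : Irrational x) : den g x ≠ 0 := by
  intro h
  rcases eq_or_ne (g.1 1 0) 0 with hc | hc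
  · rw [den, hc] at h
    simp at h
    have h2 := det_coe' g
    rw [h, hc] at h2
    simp at h2
  · apply hx.ne_rat (↑(-(g.1 1 1 : ℚ) / (g.1 1 0 : ℚ)))
    rw [den] at h
    have : (g.1 1 0 : ℝ) ≠ 0 := Int.cast_ne_zero.mpr hc
    field_simp
    push_cast
    field_simp
    linarith [h]

lemma smul_irrational (hx : Irrational x) : Irrational (num g x / den g x) := by
  rw [Irrational]
  rintro ⟨q, hq⟩
  have hden := den_ne_zero g x hx
  have h1 : num g x = q * den g x := by
    field_simp at hq
    linarith [hq]
  rw [num, den] at h1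
  rcases eq_or_ne ((g.1 0 0 : ℝ) - q * (g.1 1 0 : ℤ)) 0 with ha | ha
  · have ha' : (g.1 0 0 : ℝ) = q * (g.1 1 0 : ℤ) := by linarith
    have hb : (g.1 0 1 : ℝ) = q * (g.1 1 1 : ℤ) := by linear_combination h1 - x * ha
    have h2 := det_coe' g
    rw [ha', hb] at h2
    have : (0:ℝ) = 1 := by linear_combination h2
    norm_num at this
  · apply hx.ne_rat ((q * (g.1 1 1 : ℚ) - (g.1 0 1 : ℚ)) / ((g.1 0 0 : ℚ) - q * (g.1 1 0 : ℚ)))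
    have ha2 : ((g.1 0 0 : ℚ) - q * (g.1 1 0 : ℚ)) ≠ 0 := by
      intro h
      apply ha
      have := congrArg (fun y : ℚ => (y : ℝ)) h
      push_cast at this
      linarith [this]
    field_simp
    push_cast
    rw [eq_div_iff ha]
    nlinarith [h1]

instance : MulAction SL(2,ℤ) Irr where
  smul g x := ⟨num g x.1 / den g x.1, smul_irrational g x.1 x.2⟩
  one_smul x := by
    apply Subtype.ext
    show num 1 x.1 / den 1 x.1 = x.1
    simp [num, den]
  mul_smul g h x := by
    apply Subtype.ext
    show num (g * h) x.1 / den (g * h) x.1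
        = num g (num h x.1 / den h x.1) / den g (num h x.1 / den h x.1)
    have hdh : den h x.1 ≠ 0 := den_ne_zero h x.1 x.2
    have hdg : den g (num h x.1 / den h x.1) ≠ 0 :=
      den_ne_zero g _ (smul_irrational h x.1 x.2)
    have hGH : den (g * h) x.1 ≠ 0 := den_ne_zero _ _ x.2
    have hentry : ∀ i j : Fin 2, ((g * h).1 i j : ℝ)
        = (g.1 i 0 : ℤ) * (h.1 0 j : ℤ) + (g.1 i 1 : ℤ) * (h.1 1 j : ℤ) := by
      intro i j
      have : (g * h).1 i j = g.1 i 0 * h.1 0 j + g.1 i 1 * h.1 1 j := by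
        simp [Matrix.SpecialLinearGroup.coe_mul, Matrix.mul_apply, Fin.sum_univ_succ]
      rw [this]; push_cast; ring
    simp only [num, den] at hdh hdg hGH ⊢
    rw [hentry 1 0, hentry 1 1] at hGH ⊢
    rw [hentry 0 0, hentry 0 1]
    rw [div_eq_div_iff hGH hdg]
    field_simp
    ring

lemma smul_coe (g : SL(2,ℤ)) (x : Irr) : (g • x).1 = num g x.1 / den g x.1 := rfl

end SL2Irr

noncomputable section

variable {G : Type*} [Group G]

/-- hom from `Multiplicative (ZMod n)` sending the generator to `a` with `a ^ n = 1`. -/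
def cyclicHom (n : ℕ) (a : G) (h : a ^ (n : ℤ) = 1) : Multiplicative (ZMod n) →* G :=
  AddMonoidHom.toMultiplicativeLeft
    (ZMod.lift n ⟨zmultiplesHom (Additive G) (Additive.ofMul a), by
      show (n : ℤ) • Additive.ofMul a = 0
      rw [← ofMul_zpow, h]; rfl⟩)

lemma cyclicHom_apply (n : ℕ) (a : G) (h : a ^ (n : ℤ) = 1) (k : ℤ) :
    cyclicHom n a h (Multiplicative.ofAdd ((k : ℤ) : ZMod n)) = a ^ k := by
  simp [cyclicHom, AddMonoidHom.coe_toMultiplicativeLeft, ZMod.lift_coe, zmultiplesHom_apply,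
    ← ofMul_zpow]

example (h : Multiplicative (ZMod 2)) (hh : h ≠ 1) : h = Multiplicative.ofAdd ((1:ℤ) : ZMod 2) := by
  revert hh; revert h; decide

example (h : Multiplicative (ZMod 3)) (hh : h ≠ 1) :
    h = Multiplicative.ofAdd ((1:ℤ) : ZMod 3) ∨ h = Multiplicative.ofAdd ((2:ℤ) : ZMod 3) := by
  revert hh; revert h; decide

open ModularGroup Pointwise

namespace SL2Pres

noncomputable def act : SL(2,ℤ) →* Equiv.Perm Irr := MulAction.toPermHom SL(2,ℤ) Irr

@[simp] lemma act_apply (g : SL(2,ℤ)) (x : Irr) : act g x = g • x := rfl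

lemma neg_one_smul_eq (g : SL(2,ℤ)) (hg : g.1 = !![-1,0;0,-1]) (x : Irr) : g • x = x := by
  apply Subtype.ext
  rw [SL2Irr.smul_coe, SL2Irr.num, SL2Irr.den, hg]
  norm_num

lemma S_sq_coe : (ModularGroup.S ^ 2).1 = !![-1,0;0,-1] := by
  ext i j
  fin_cases i <;> fin_cases j <;>
    simp [pow_two, Matrix.SpecialLinearGroup.coe_mul, ModularGroup.coe_S, Matrix.mul_apply, Fin.sum_univ_succ]

lemma ST_coe : ((ModularGroup.S * ModularGroup.T)).1 = !![0,-1;1,1] := by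
  ext i j
  fin_cases i <;> fin_cases j <;>
    simp [ModularGroup.coe_S, ModularGroup.coe_T, Matrix.SpecialLinearGroup.coe_mul, Matrix.mul_apply, Fin.sum_univ_succ]

lemma ST_sq_coe : ((ModularGroup.S * ModularGroup.T)^2).1 = !![-1,-1;1,0] := by
  have : ((ModularGroup.S * ModularGroup.T)^2).1 = ((ModularGroup.S * ModularGroup.T).1)^2 := rfl
  rw [this, ST_coe]
  ext i j
  fin_cases i <;> fin_cases j <;>
    simp [pow_two, Matrix.mul_apply, Fin.sum_univ_succ]

lemma ST_pow3 : (ModularGroup.S * ModularGroup.T) ^ 3 = ModularGroup.S ^ 2 := by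
  apply Subtype.ext
  show ((ModularGroup.S * ModularGroup.T).1)^3 = (ModularGroup.S.1)^2
  ext i j
  fin_cases i <;> fin_cases j <;>
    simp [ModularGroup.coe_S, ModularGroup.coe_T, Matrix.SpecialLinearGroup.coe_mul, pow_succ, Matrix.mul_apply, Fin.sum_univ_succ]

lemma myS_pow4 : ModularGroup.S ^ 4 = 1 := by
  apply Subtype.ext
  show (ModularGroup.S.1)^4 = 1
  ext i j
  fin_cases i <;> fin_cases j <;>
    simp [ModularGroup.S, pow_succ, Matrix.mul_apply, Fin.sum_univ_succ]

lemma act_S_sq : act (ModularGroup.S ^ 2) = 1 := by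
  ext x
  exact congrArg Subtype.val (neg_one_smul_eq _ S_sq_coe x)

lemma sigma_sq : (act ModularGroup.S) ^ ((2:ℕ):ℤ) = 1 := by
  rw [zpow_natCast, ← map_pow, act_S_sq]

lemma rho_cube : (act (ModularGroup.S * ModularGroup.T)) ^ ((3:ℕ):ℤ) = 1 := by
  rw [zpow_natCast, ← map_pow, ST_pow3, act_S_sq]

-- values of the actions
lemma S_smul_val (x : Irr) : (ModularGroup.S • x).1 = -1 / x.1 := by
  rw [SL2Irr.smul_coe, SL2Irr.num, SL2Irr.den]
  norm_num [ModularGroup.S]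

lemma ST_smul_val (x : Irr) : ((ModularGroup.S * ModularGroup.T) • x).1 = -1 / (x.1 + 1) := by
  rw [SL2Irr.smul_coe, SL2Irr.num, SL2Irr.den, ST_coe]
  norm_num

lemma ST2_smul_val (x : Irr) :
    (((ModularGroup.S * ModularGroup.T)^2) • x).1 = (-x.1 - 1) / x.1 := by
  rw [SL2Irr.smul_coe, SL2Irr.num, SL2Irr.den, ST_sq_coe]
  simp
  ring

lemma zmod2_cases (h : Multiplicative (ZMod 2)) (hh : h ≠ 1) :
    h = Multiplicative.ofAdd ((1:ℤ) : ZMod 2) := by revert hh; revert h; decide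

lemma zmod3_cases (h : Multiplicative (ZMod 3)) (hh : h ≠ 1) :
    h = Multiplicative.ofAdd ((1:ℤ) : ZMod 3) ∨ h = Multiplicative.ofAdd ((2:ℤ) : ZMod 3) := by
  revert hh; revert h; decide

abbrev Hfam : Fin 2 → Type := fun i => Multiplicative (ZMod (![2,3] i))

noncomputable def ff : ∀ i, Hfam i →* Equiv.Perm Irr
  | ⟨0, _⟩ => cyclicHom 2 (act ModularGroup.S) sigma_sq
  | ⟨1, _⟩ => cyclicHom 3 (act (ModularGroup.S * ModularGroup.T)) rho_cube

lemma ff0 : ff 0 = cyclicHom 2 (act ModularGroup.S) sigma_sq := rfl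
lemma ff1 : ff 1 = cyclicHom 3 (act (ModularGroup.S * ModularGroup.T)) rho_cube := rfl

def XX : Fin 2 → Set Irr := ![{x | 0 < x.1}, {x | x.1 < 0}]

lemma XX0 : XX 0 = {x : Irr | 0 < x.1} := rfl
lemma XX1 : XX 1 = {x : Irr | x.1 < 0} := rfl

lemma lift_ff_injective : Function.Injective (Monoid.CoprodI.lift ff) := by
  have hd : Disjoint ({x : Irr | 0 < x.1}) {x : Irr | x.1 < 0} := by
    rw [Set.disjoint_left]
    intro x hx hx'
    simp only [Set.mem_setOf_eq] at hx hx'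
    linarith
  apply Monoid.CoprodI.lift_injective_of_ping_pong ff _ XX
  · intro i
    fin_cases i
    · refine ⟨⟨Real.sqrt 2, irrational_sqrt_two⟩, ?_⟩
      show (0:ℝ) < Real.sqrt 2
      positivity
    · refine ⟨⟨-Real.sqrt 2, by simpa using irrational_sqrt_two.neg⟩, ?_⟩
      show (-Real.sqrt 2 : ℝ) < 0
      have : 0 < Real.sqrt 2 := by positivity
      linarith
  · intro i j hij
    fin_cases i <;> fin_cases j
    · exact absurd rfl hij
    · exact hd
    · exact hd.symm
    · exact absurd rfl hij
  · intro i j hij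
    fin_cases i <;> fin_cases j
    · exact absurd rfl hij
    · -- i = 0, j = 1 : sigma maps negatives to positives
      intro h hh
      have h1 := zmod2_cases h hh
      subst h1
      rintro y ⟨x, hx, rfl⟩
      have hx' : x.1 < 0 := hx
      show (0:ℝ) < ((cyclicHom 2 (act ModularGroup.S) sigma_sq
          (Multiplicative.ofAdd ((1:ℤ) : ZMod 2))) • x).1
      rw [cyclicHom_apply]
      have : ((act ModularGroup.S) ^ (1:ℤ)) • x = ModularGroup.S • x := by
        rw [zpow_one]; rfl
      rw [this, S_smul_val]
      rw [div_pos_iff]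
      right
      constructor <;> linarith
    · -- i = 1, j = 0
      intro h hh
      have h1 := zmod3_cases h hh
      rcases h1 with h1 | h1 <;> subst h1 <;>
        rintro y ⟨x, hx, rfl⟩ <;> have hx' : (0:ℝ) < x.1 := hx
      · show ((cyclicHom 3 (act (ModularGroup.S * ModularGroup.T)) rho_cube
            (Multiplicative.ofAdd ((1:ℤ) : ZMod 3))) • x).1 < 0
        rw [cyclicHom_apply]
        have : ((act (ModularGroup.S * ModularGroup.T)) ^ (1:ℤ)) • x
            = (ModularGroup.S * ModularGroup.T) • x := by rw [zpow_one]; rfl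
        rw [this, ST_smul_val]
        apply div_neg_of_neg_of_pos <;> linarith
      · show ((cyclicHom 3 (act (ModularGroup.S * ModularGroup.T)) rho_cube
            (Multiplicative.ofAdd ((2:ℤ) : ZMod 3))) • x).1 < 0
        rw [cyclicHom_apply]
        have : ((act (ModularGroup.S * ModularGroup.T)) ^ (2:ℤ)) • x
            = ((ModularGroup.S * ModularGroup.T) ^ 2) • x := by
          rw [show ((2:ℤ)) = ((2:ℕ):ℤ) by norm_num, zpow_natCast, ← map_pow]; rfl
        rw [this, ST2_smul_val]
        apply div_neg_of_neg_of_pos <;> linarith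
    · exact absurd rfl hij
  · right
    refine ⟨1, ?_⟩
    show (3:Cardinal) ≤ Cardinal.mk (Multiplicative (ZMod 3))
    rw [Cardinal.mk_fintype]
    simp

end SL2Pres

section Gen
open ModularGroup


lemma T_zpow_mul_coe (n : ℤ) (g : SL(2,ℤ)) :
    ((ModularGroup.T ^ n * g).1) = !![g.1 0 0 + n * g.1 1 0, g.1 0 1 + n * g.1 1 1;
      g.1 1 0, g.1 1 1] := by
  have hT := ModularGroup.coe_T_zpow n
  rw [Matrix.SpecialLinearGroup.coe_mul, hT]
  ext i j
  fin_cases i <;> fin_cases j <;>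
    simp [Matrix.mul_apply, Fin.sum_univ_succ] <;> ring

lemma S_mul_coe (g : SL(2,ℤ)) :
    ((ModularGroup.S * g).1) = !![-g.1 1 0, -g.1 1 1; g.1 0 0, g.1 0 1] := by
  rw [Matrix.SpecialLinearGroup.coe_mul, ModularGroup.coe_S]
  ext i j
  fin_cases i <;> fin_cases j <;>
    simp [Matrix.mul_apply, Fin.sum_univ_succ]

lemma mem_closure_ST (g : SL(2,ℤ)) :
    g ∈ Subgroup.closure {ModularGroup.S, ModularGroup.T} := by
  set H := Subgroup.closure {ModularGroup.S, ModularGroup.T} with hH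
  have hS : ModularGroup.S ∈ H := Subgroup.subset_closure (by simp)
  have hT : ModularGroup.T ∈ H := Subgroup.subset_closure (by simp)
  have hTz : ∀ n : ℤ, ModularGroup.T ^ n ∈ H := fun n => Subgroup.zpow_mem H hT n
  -- strong induction on |c|
  suffices h : ∀ n : ℕ, ∀ g : SL(2,ℤ), (g.1 1 0).natAbs ≤ n → g ∈ H by
    exact h (g.1 1 0).natAbs g le_rfl
  intro n
  induction n with
  | zero =>
    intro g hg
    have hc : g.1 1 0 = 0 := by omega
    have hdet := g.2
    rw [Matrix.det_fin_two, hc] at hdet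
    simp at hdet
    have hd : g.1 0 0 = 1 ∧ g.1 1 1 = 1 ∨ g.1 0 0 = -1 ∧ g.1 1 1 = -1 :=
      Int.eq_one_or_neg_one_of_mul_eq_one' hdet
    rcases hd with ⟨ha, hd⟩ | ⟨ha, hd⟩
    · -- g = T ^ b
      have : g = ModularGroup.T ^ (g.1 0 1) := by
        apply Subtype.ext
        rw [ModularGroup.coe_T_zpow]
        ext i j
        fin_cases i <;> fin_cases j <;> simp [ha, hd, hc]
      rw [this]; exact hTz _
    · -- g = S^2 * T^(-b)
      have : g = ModularGroup.S ^ 2 * ModularGroup.T ^ (-(g.1 0 1)) := by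
        apply Subtype.ext
        have hS2 : (ModularGroup.S ^ 2).1 = !![-1, 0; 0, -1] := by
          ext i j
          fin_cases i <;> fin_cases j <;>
            simp [pow_two, Matrix.SpecialLinearGroup.coe_mul, ModularGroup.coe_S, Matrix.mul_apply, Fin.sum_univ_succ]
        rw [Matrix.SpecialLinearGroup.coe_mul, hS2, ModularGroup.coe_T_zpow]
        ext i j
        fin_cases i <;> fin_cases j <;>
          simp [ha, hd, hc, Matrix.mul_apply, Fin.sum_univ_succ]
      rw [this]
      exact mul_mem (pow_mem hS 2) (hTz _)
  | succ n ih =>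
    intro g hg
    rcases Nat.lt_or_ge (g.1 1 0).natAbs (n+1) with hlt | hge
    · exact ih g (by omega)
    have hc : g.1 1 0 ≠ 0 := by
      intro h
      rw [h] at hge
      omega
    -- euclidean step
    set c := g.1 1 0 with hc'
    set a := g.1 0 0 with ha'
    set q := a / c with hq'
    set g' := ModularGroup.S * (ModularGroup.T ^ (-q) * g) with hg'
    have hcg' : g'.1 1 0 = a - q * c := by
      rw [hg', S_mul_coe, T_zpow_mul_coe]
      simp
      ring
    have hlt2 : (g'.1 1 0).natAbs < (g.1 1 0).natAbs := by
      rw [hcg']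
      have h1 : a - q * c = a % c := by
        rw [hq', Int.emod_def]; ring
      rw [h1]
      have h2 : 0 ≤ a % c := Int.emod_nonneg a hc
      have h3 : a % c < |c| := Int.emod_lt_abs a hc
      rw [Int.abs_eq_natAbs] at h3
      show (a % c).natAbs < c.natAbs
      omega
    have hg'H : g' ∈ H := ih g' (by omega)
    have : g = ModularGroup.T ^ q * (ModularGroup.S⁻¹ * g') := by
      rw [hg']
      group
    rw [this]
    exact mul_mem (hTz q) (mul_mem (inv_mem hS) hg'H)

end Gen


namespace SL2Pres

abbrev PG := PresentedGroup sl2PresRels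

def sG : PG := PresentedGroup.of (rels := sl2PresRels) 0
def tG : PG := PresentedGroup.of (rels := sl2PresRels) 1

lemma mk_rel (r : FreeGroup (Fin 2)) (hr : r ∈ sl2PresRels) :
    PresentedGroup.mk sl2PresRels r = 1 := by
  have : r ∈ Subgroup.normalClosure sl2PresRels := Subgroup.subset_normalClosure hr
  exact (QuotientGroup.eq_one_iff r).mpr this

lemma mk_of (x : Fin 2) :
    PresentedGroup.mk sl2PresRels (FreeGroup.of x) = PresentedGroup.of (rels := sl2PresRels) x :=
  rfl

lemma s_pow4 : sG ^ 4 = 1 := by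
  have := mk_rel _ (Set.mem_insert _ _)
  rw [map_pow, mk_of] at this
  exact this

lemma st_rel : (sG * tG) ^ 3 = sG ^ 2 := by
  have := mk_rel (((FreeGroup.of 0) * (FreeGroup.of 1)) ^ 3 * ((FreeGroup.of 0) ^ 2)⁻¹)
    (Set.mem_insert_iff.mpr (Or.inr rfl))
  rw [_root_.map_mul, _root_.map_inv, map_pow, map_pow, _root_.map_mul, mk_of, mk_of, mul_inv_eq_one] at this
  exact this

def zG : PG := sG ^ 2

lemma z_sq : zG ^ 2 = 1 := by
  rw [zG, ← pow_mul]
  exact s_pow4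

lemma z_comm_s : zG * sG = sG * zG := by rw [zG]; group

lemma z_comm_t : zG * tG = tG * zG := by
  have h1 : zG * (sG * tG) = (sG * tG) * zG := by rw [zG, ← st_rel, ← pow_succ, ← pow_succ']
  have h2 : sG⁻¹ * zG = zG * sG⁻¹ := by rw [zG]; group
  calc zG * tG = zG * (sG⁻¹ * (sG * tG)) := by group
    _ = (zG * sG⁻¹) * (sG * tG) := by group
    _ = (sG⁻¹ * zG) * (sG * tG) := by rw [← h2]
    _ = sG⁻¹ * ((sG * tG) * zG) := by rw [mul_assoc, h1]
    _ = tG * zG := by group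

lemma z_central : ∀ g : PG, g * zG = zG * g := by
  intro g
  have hg : g ∈ Subgroup.centralizer {zG} := by
    apply PresentedGroup.generated_by
    intro x
    rw [Subgroup.mem_centralizer_iff]
    rintro h (rfl : h = zG)
    fin_cases x
    · exact z_comm_s
    · exact z_comm_t
  exact (Subgroup.mem_centralizer_iff.mp hg zG rfl).symm

def NG : Subgroup PG := Subgroup.zpowers zG

instance NG_normal : NG.Normal := by
  constructor
  rintro n ⟨k, rfl⟩ g
  have hc : Commute g zG := z_central g
  have h := (hc.zpow_right k).eq
  have hE : g * zG ^ k * g⁻¹ = zG ^ k := by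
    rw [h, mul_assoc]
    simp
  exact hE ▸ ⟨k, rfl⟩

end SL2Pres

namespace SL2Pres

open Monoid

def xg : Multiplicative (ZMod 2) := Multiplicative.ofAdd ((1:ℤ) : ZMod 2)
def yg : Multiplicative (ZMod 3) := Multiplicative.ofAdd ((1:ℤ) : ZMod 3)

noncomputable def fκ : Fin 2 → CoprodI Hfam
  | ⟨0, _⟩ => CoprodI.of (M := Hfam) (i := 0) xg
  | ⟨1, _⟩ => CoprodI.of (M := Hfam) (i := 0) xg * CoprodI.of (M := Hfam) (i := 1) yg

lemma of_xg_sq : CoprodI.of (M := Hfam) (i := 0) xg * CoprodI.of (M := Hfam) (i := 0) xg = 1 := by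
  erw [← _root_.map_mul]
  have : xg * xg = 1 := by decide
  erw [this, _root_.map_one]

lemma of_yg_cube : (CoprodI.of (M := Hfam) (i := 1) yg) ^ 3 = 1 := by
  erw [← map_pow]
  have : yg ^ 3 = 1 := by decide
  erw [this, _root_.map_one]

lemma hκrels : ∀ r ∈ sl2PresRels, FreeGroup.lift fκ r = 1 := by
  intro r hr
  rcases Set.mem_insert_iff.mp hr with rfl | hr2
  · rw [map_pow, FreeGroup.lift_apply_of]
    show (CoprodI.of (M := Hfam) (i := 0) xg) ^ 4 = 1
    rw [show (4:ℕ) = 2 + 2 from rfl, pow_add, pow_two, of_xg_sq, one_mul]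
  · rw [Set.mem_singleton_iff.mp hr2]
    rw [_root_.map_mul, _root_.map_inv, map_pow, map_pow, _root_.map_mul, FreeGroup.lift_apply_of,
      FreeGroup.lift_apply_of]
    show (fκ 0 * fκ 1) ^ 3 * ((fκ 0) ^ 2)⁻¹ = 1
    have h01 : fκ 0 * fκ 1 = CoprodI.of (M := Hfam) (i := 1) yg := by
      show CoprodI.of (M := Hfam) (i := 0) xg *
        (CoprodI.of (M := Hfam) (i := 0) xg * CoprodI.of (M := Hfam) (i := 1) yg) = _
      rw [← mul_assoc, of_xg_sq, one_mul]
    have h02 : (fκ 0) ^ 2 = 1 := by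
      show (CoprodI.of (M := Hfam) (i := 0) xg) ^ 2 = 1
      rw [pow_two, of_xg_sq]
    rw [h01, h02, of_yg_cube, inv_one, mul_one]

noncomputable def κ : PG →* CoprodI Hfam := PresentedGroup.toGroup hκrels

abbrev QG := PG ⧸ NG

def mkq : PG →* QG := QuotientGroup.mk' NG

lemma mkq_z : mkq zG = 1 := by
  rw [mkq, QuotientGroup.mk'_apply, QuotientGroup.eq_one_iff]
  exact Subgroup.mem_zpowers zG

lemma mkq_s_sq : (mkq sG) ^ ((2:ℕ):ℤ) = 1 := by
  rw [zpow_natCast, ← map_pow]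
  show mkq zG = 1
  exact mkq_z

lemma mkq_st_cube : (mkq (sG * tG)) ^ ((3:ℕ):ℤ) = 1 := by
  rw [zpow_natCast, ← map_pow, st_rel]
  show mkq zG = 1
  exact mkq_z

noncomputable def μfam : ∀ i, Hfam i →* QG
  | ⟨0, _⟩ => cyclicHom 2 (mkq sG) mkq_s_sq
  | ⟨1, _⟩ => cyclicHom 3 (mkq (sG * tG)) mkq_st_cube

noncomputable def μ : CoprodI Hfam →* QG := CoprodI.lift μfam

lemma μκ : μ.comp κ = mkq := by
  apply PresentedGroup.ext
  intro x
  fin_cases x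
  · show μ (κ (PresentedGroup.of 0)) = mkq sG
    rw [κ, PresentedGroup.toGroup.of]
    show μ (CoprodI.of (M := Hfam) (i := 0) xg) = mkq sG
    rw [μ]; refine (CoprodI.lift_of (M := Hfam) _ _).trans ?_
    show cyclicHom 2 (mkq sG) mkq_s_sq xg = mkq sG
    rw [xg, cyclicHom_apply, zpow_one]
  · show μ (κ (PresentedGroup.of 1)) = mkq tG
    rw [κ, PresentedGroup.toGroup.of]
    show μ (CoprodI.of (M := Hfam) (i := 0) xg * CoprodI.of (M := Hfam) (i := 1) yg) = mkq tG
    erw [_root_.map_mul, μ, CoprodI.lift_of, CoprodI.lift_of]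
    show cyclicHom 2 (mkq sG) mkq_s_sq xg * cyclicHom 3 (mkq (sG * tG)) mkq_st_cube yg = mkq tG
    rw [xg, yg, cyclicHom_apply, cyclicHom_apply, zpow_one, zpow_one, ← _root_.map_mul]
    have : sG * (sG * tG) = zG * tG := by rw [zG, pow_two, mul_assoc]
    rw [this, _root_.map_mul, mkq_z, one_mul]

noncomputable def fφ : Fin 2 → SL(2,ℤ)
  | ⟨0, _⟩ => ModularGroup.S
  | ⟨1, _⟩ => ModularGroup.T

lemma hφrels : ∀ r ∈ sl2PresRels, FreeGroup.lift fφ r = 1 := by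
  intro r hr
  rcases Set.mem_insert_iff.mp hr with rfl | hr2
  · rw [map_pow, FreeGroup.lift_apply_of]
    exact myS_pow4
  · rw [Set.mem_singleton_iff.mp hr2]
    rw [_root_.map_mul, _root_.map_inv, map_pow, map_pow, _root_.map_mul, FreeGroup.lift_apply_of,
      FreeGroup.lift_apply_of]
    show (ModularGroup.S * ModularGroup.T) ^ 3 * (ModularGroup.S ^ 2)⁻¹ = 1
    rw [ST_pow3, mul_inv_cancel]

noncomputable def φSL : PG →* SL(2,ℤ) := PresentedGroup.toGroup hφrels

lemma φSL_s : φSL sG = ModularGroup.S := PresentedGroup.toGroup.of hφrels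

lemma φSL_t : φSL tG = ModularGroup.T := PresentedGroup.toGroup.of hφrels

lemma actφκ : (CoprodI.lift ff).comp κ = act.comp φSL := by
  apply PresentedGroup.ext
  intro x
  fin_cases x
  · show CoprodI.lift ff (κ (PresentedGroup.of 0)) = act (φSL sG)
    rw [φSL_s, κ, PresentedGroup.toGroup.of]
    show CoprodI.lift ff (CoprodI.of (M := Hfam) (i := 0) xg) = act ModularGroup.S
    refine (CoprodI.lift_of (M := Hfam) _ _).trans ?_
    show cyclicHom 2 (act ModularGroup.S) sigma_sq xg = act ModularGroup.S
    rw [xg, cyclicHom_apply, zpow_one]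
  · show CoprodI.lift ff (κ (PresentedGroup.of 1)) = act (φSL tG)
    rw [φSL_t, κ, PresentedGroup.toGroup.of]
    show CoprodI.lift ff (CoprodI.of (M := Hfam) (i := 0) xg
        * CoprodI.of (M := Hfam) (i := 1) yg) = act ModularGroup.T
    erw [_root_.map_mul, CoprodI.lift_of, CoprodI.lift_of]
    show cyclicHom 2 (act ModularGroup.S) sigma_sq xg
        * cyclicHom 3 (act (ModularGroup.S * ModularGroup.T)) rho_cube yg = act ModularGroup.T
    rw [xg, yg, cyclicHom_apply, cyclicHom_apply, zpow_one, zpow_one, ← _root_.map_mul]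
    have : ModularGroup.S * (ModularGroup.S * ModularGroup.T)
        = ModularGroup.S ^ 2 * ModularGroup.T := by rw [pow_two, mul_assoc]
    rw [this, _root_.map_mul, act_S_sq, one_mul]

lemma S_sq_ne_one : ModularGroup.S ^ 2 ≠ 1 := by
  intro h
  have h2 : (ModularGroup.S ^ 2).1 0 0 = (1 : SL(2,ℤ)).1 0 0 := by rw [h]
  rw [S_sq_coe] at h2
  simp at h2

lemma φSL_inj : Function.Injective φSL := by
  rw [injective_iff_map_eq_one]
  intro g hg
  have h1 : CoprodI.lift ff (κ g) = 1 := by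
    have := DFunLike.congr_fun actφκ g
    simp only [MonoidHom.comp_apply] at this
    rw [this, hg, _root_.map_one]
  have h2 : κ g = 1 := lift_ff_injective (by rw [h1, _root_.map_one])
  have h3 : mkq g = 1 := by
    have := DFunLike.congr_fun μκ g
    simp only [MonoidHom.comp_apply] at this
    rw [← this, h2, _root_.map_one]
  have h4 : g ∈ NG := by
    rw [mkq, QuotientGroup.mk'_apply, QuotientGroup.eq_one_iff] at h3
    exact h3
  obtain ⟨k, rfl⟩ := h4
  have hz2 : zG ^ (2:ℤ) = 1 := by
    rw [show (2:ℤ) = ((2:ℕ):ℤ) from rfl, zpow_natCast, z_sq]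
  rcases Int.even_or_odd k with ⟨m, rfl⟩ | ⟨m, rfl⟩
  · show zG ^ (m + m) = 1
    rw [show m + m = 2 * m by ring, _root_.zpow_mul, hz2, _root_.one_zpow]
  · exfalso
    have hzg : zG ^ (2 * m + 1) = zG := by
      rw [_root_.zpow_add, _root_.zpow_mul, hz2, _root_.one_zpow, one_mul, zpow_one]
    rw [show (fun x => zG ^ x) (2 * m + 1) = zG ^ (2 * m + 1) from rfl] at hg
    rw [hzg] at hg
    apply S_sq_ne_one
    have : φSL zG = ModularGroup.S ^ 2 := by
      rw [zG, map_pow, φSL_s]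
    rw [← this, hg]

lemma φSL_surj : Function.Surjective φSL := by
  intro g
  have hle : Subgroup.closure {ModularGroup.S, ModularGroup.T} ≤ φSL.range := by
    rw [Subgroup.closure_le]
    intro x hx
    rcases hx with rfl | hx
    · exact ⟨sG, φSL_s⟩
    · rw [Set.mem_singleton_iff.mp hx]
      exact ⟨tG, φSL_t⟩
  obtain ⟨y, hy⟩ := hle (mem_closure_ST g)
  exact ⟨y, hy⟩

end SL2Pres

theorem sl2z_presentation :
    ∃ φ : PresentedGroup sl2PresRels ≃* Matrix.SpecialLinearGroup (Fin 2) ℤ,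
      φ (PresentedGroup.of 0) =
        ⟨!![0, -1; 1, 0], by simp [Matrix.det_fin_two_of]⟩ ∧
      φ (PresentedGroup.of 1) =
        ⟨!![1, 1; 0, 1], by simp [Matrix.det_fin_two_of]⟩ := by
  refine ⟨MulEquiv.ofBijective SL2Pres.φSL ⟨SL2Pres.φSL_inj, SL2Pres.φSL_surj⟩, ?_, ?_⟩
  · show SL2Pres.φSL SL2Pres.sG = _
    rw [SL2Pres.φSL_s]
    exact Subtype.ext rfl
  · show SL2Pres.φSL SL2Pres.tG = _
    rw [SL2Pres.φSL_t]
    exact Subtype.ext rfl
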